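/- arXiv:1610.07553 — 2 statements merged into one kernel-verified Lean document; each statement's English description precedes it below -/
import Mathlib

section
/- Let M be a set of finite sequences of natural numbers that are pairwise incomparable under the initial-segment relation. Then every element of Ω_M has exactly one representation of the form η₀⌢⟨2n₀+1⟩⌢η₁⌢⟨2n₁+1⟩⌢⋯⌢⟨2n_{k−1}+1⟩⌢η_k with k ∈ ℕ, n₀,…,n_{k−1} ∈ ℕ and η₀,…,η_k ∈ M; that is, the number k, the sequences η₀,…,η_k ∈ M and the numbers n₀,…,n_{k−1} are uniquely determined. -/
/-- The tree conditions (i)-(iii) on `Λ` from the definition of `Y_ε`. -/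
def LamTree (Λ : Set (List ℕ)) : Prop :=
  Λ.Nonempty ∧
  (∀ ρ ∈ Λ, ∀ σ : List ℕ, σ <+: ρ → σ ∈ Λ) ∧
  (∀ ρ ∈ Λ, (∀ k : ℕ, ρ ++ [k] ∈ Λ) ∨ (∀ k : ℕ, ρ ++ [k] ∉ Λ)) ∧
  (∀ ν₁ ν₂ : List ℕ, ν₁.length = ν₂.length → ν₁ ∈ Λ →
      (∀ l, ν₁.getD l 0 ≤ ν₂.getD l 0) → ν₂ ∈ Λ) ∧
  ¬ ∃ x : ℕ → ℕ, ∀ n : ℕ, (List.ofFn fun i : Fin n => x i) ∈ Λ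

/-- The conditions on the rank function `h : Λ → ε + 1` from the definition of `Y_ε`. -/
def LamRank (ε : Ordinal) (Λ : Set (List ℕ)) (h : List ℕ → Ordinal) : Prop :=
  (∀ ρ ∈ Λ, h ρ ≤ ε) ∧
  h [] = ε ∧
  (∀ ρ₁ ∈ Λ, ∀ ρ₂ ∈ Λ, ρ₁ <+: ρ₂ → ρ₁ ≠ ρ₂ → h ρ₂ < h ρ₁) ∧
  (∀ ρ ∈ Λ, ∀ ζ : Ordinal, h ρ = ζ + 1 → ∀ k : ℕ, ρ ++ [k] ∈ Λ → h (ρ ++ [k]) = ζ) ∧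
  (∀ ρ ∈ Λ, Order.IsSuccLimit (h ρ) →
      ∀ β < h ρ, ∃ K : ℕ, ∀ k ≥ K, ρ ++ [k] ∈ Λ → β ≤ h (ρ ++ [k]))

/-- `(Λ, h) ∈ Y_ε`. -/
def MemY (ε : Ordinal) (Λ : Set (List ℕ)) (h : List ℕ → Ordinal) : Prop :=
  LamTree Λ ∧ LamRank ε Λ h

/-- `max(Λ)`: the elements of `Λ` with no proper extension in `Λ`. -/
def maxLam (Λ : Set (List ℕ)) : Set (List ℕ) :=
  {ρ ∈ Λ | ∀ σ ∈ Λ, ρ <+: σ → σ = ρ}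

/-- `Ω_M`: sequences of the form `η₀⌢⟨2n₀+1⟩⌢η₁⌢⟨2n₁+1⟩⌢⋯⌢η_k` with all `ηᵢ ∈ M`. -/
inductive InOmega (M : Set (List ℕ)) : List ℕ → Prop
  | base : ∀ η ∈ M, InOmega M η
  | step : ∀ ν, InOmega M ν → ∀ (n : ℕ), ∀ η ∈ M, InOmega M (ν ++ (2 * n + 1) :: η)

/-- `Ω_M⁺ = {ν⌢⟨2n⟩ : ν ∈ Ω_M, n ∈ ℕ}`. -/
def OmegaPlus (M : Set (List ℕ)) : Set (List ℕ) :=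
  {ρ | ∃ ν, InOmega M ν ∧ ∃ n : ℕ, ρ = ν ++ [2 * n]}

/-- `B_Λ`: the reals having no initial segment in `Ω_{max Λ}⁺`. -/
def BLam (Λ : Set (List ℕ)) : Set (ℕ → ℕ) :=
  {x | ∀ η ∈ OmegaPlus (maxLam Λ), ¬ (∀ i < η.length, x i = η.getD i 0)}

/-- `assemble [(η₀,n₀),…,(η_{k-1},n_{k-1})] η_k = η₀⌢⟨2n₀+1⟩⌢η₁⌢⟨2n₁+1⟩⌢⋯⌢η_k`. -/
def assemble (ps : List (List ℕ × ℕ)) (last : List ℕ) : List ℕ :=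
  ps.foldr (fun p acc => p.1 ++ (2 * p.2 + 1) :: acc) last


lemma assemble_cons (p : List ℕ × ℕ) (ps : List (List ℕ × ℕ)) (last : List ℕ) :
    assemble (p :: ps) last = p.1 ++ (2 * p.2 + 1) :: assemble ps last := rfl

lemma assemble_snoc (ps : List (List ℕ × ℕ)) (l : List ℕ) (n : ℕ) (η : List ℕ) :
    assemble (ps ++ [(l, n)]) η = assemble ps l ++ (2 * n + 1) :: η := by
  induction ps with
  | nil => rfl
  | cons p ps ih => simp [assemble_cons, ih]

lemma assemble_inj (M : Set (List ℕ))
    (hM : ∀ η ∈ M, ∀ ν ∈ M, η <+: ν → η = ν) :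
    ∀ ps₁ : List (List ℕ × ℕ), ∀ last₁ : List ℕ, ∀ ps₂ : List (List ℕ × ℕ), ∀ last₂ : List ℕ,
      (∀ p ∈ ps₁, p.1 ∈ M) → last₁ ∈ M → (∀ p ∈ ps₂, p.1 ∈ M) → last₂ ∈ M →
      assemble ps₁ last₁ = assemble ps₂ last₂ → ps₁ = ps₂ ∧ last₁ = last₂ := by
  intro ps₁
  induction ps₁ with
  | nil =>
    intro last₁ ps₂ last₂ _ hl₁ h₂ hl₂ heq
    cases ps₂ with
    | nil => exact ⟨rfl, heq⟩
    | cons q qs =>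
      exfalso
      rw [assemble_cons] at heq
      have hq : q.1 ∈ M := h₂ q (by simp)
      have hpre : q.1 <+: last₁ := ⟨_, heq.symm⟩
      have : q.1 = last₁ := hM _ hq _ hl₁ hpre
      rw [← this] at heq
      have := congrArg List.length heq
      simp [assemble] at this
  | cons p ps ih =>
    intro last₁ ps₂ last₂ h₁ hl₁ h₂ hl₂ heq
    cases ps₂ with
    | nil =>
      exfalso
      rw [assemble_cons] at heq
      have hp : p.1 ∈ M := h₁ p (by simp)
      have hpre : p.1 <+: last₂ := ⟨_, heq⟩
      have : p.1 = last₂ := hM _ hp _ hl₂ hpre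
      rw [← this] at heq
      have := congrArg List.length heq
      simp [assemble] at this
    | cons q qs =>
      rw [assemble_cons, assemble_cons] at heq
      have hp : p.1 ∈ M := h₁ p (by simp)
      have hq : q.1 ∈ M := h₂ q (by simp)
      have hpre₁ : p.1 <+: (p.1 ++ (2 * p.2 + 1) :: assemble ps last₁) := ⟨_, rfl⟩
      have hpre₂ : q.1 <+: (p.1 ++ (2 * p.2 + 1) :: assemble ps last₁) := by
        rw [heq]; exact ⟨_, rfl⟩
      have hpq : p.1 = q.1 := by
        rcases List.prefix_or_prefix_of_prefix hpre₁ hpre₂ with h | h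
        · exact hM _ hp _ hq h
        · exact (hM _ hq _ hp h).symm
      rw [hpq] at heq
      have htail := List.append_cancel_left heq
      have hhead : 2 * p.2 + 1 = 2 * q.2 + 1 := by
        exact (List.cons.injEq _ _ _ _ ▸ htail).1
      have hn : p.2 = q.2 := by omega
      have hrest : assemble ps last₁ = assemble qs last₂ :=
        (List.cons.injEq _ _ _ _ ▸ htail).2
      obtain ⟨hps, hlast⟩ := ih last₁ qs last₂ (fun r hr => h₁ r (by simp [hr])) hl₁
        (fun r hr => h₂ r (by simp [hr])) hl₂ hrest
      refine ⟨?_, hlast⟩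
      rw [hps]
      have : p = q := Prod.ext hpq hn
      rw [this]

lemma assemble_exists (M : Set (List ℕ)) :
    ∀ ρ, InOmega M ρ → ∃ r : List (List ℕ × ℕ) × List ℕ,
      (∀ p ∈ r.1, p.1 ∈ M) ∧ r.2 ∈ M ∧ ρ = assemble r.1 r.2 := by
  intro ρ h
  induction h with
  | base η hη => exact ⟨([], η), by simp, hη, rfl⟩
  | step ν _ n η hη ih =>
    obtain ⟨⟨ps, last⟩, hps, hlast, heq⟩ := ih
    refine ⟨(ps ++ [(last, n)], η), ?_, hη, ?_⟩
    · intro p hp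
      rcases List.mem_append.mp hp with h | h
      · exact hps p h
      · simp at h; rw [h]; exact hlast
    · rw [assemble_snoc, ← heq]

/-- If `M` consists of pairwise `⊑`-incomparable finite sequences,
then every element of `Ω_M` has a unique representation
`η₀⌢⟨2n₀+1⟩⌢η₁⌢⟨2n₁+1⟩⌢⋯⌢η_k` with all `ηᵢ ∈ M`: the number `k`, the sequences
`ηᵢ ∈ M` and the numbers `nᵢ` are uniquely determined. -/
theorem Omega_unique_decomposition
    (M : Set (List ℕ))
    (hM : ∀ η ∈ M, ∀ ν ∈ M, η <+: ν → η = ν) :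
    ∀ ρ, InOmega M ρ →
      ∃! r : List (List ℕ × ℕ) × List ℕ,
        (∀ p ∈ r.1, p.1 ∈ M) ∧ r.2 ∈ M ∧ ρ = assemble r.1 r.2 := by
  intro ρ hρ
  obtain ⟨⟨ps, last⟩, hps, hlast, heq⟩ := assemble_exists M ρ hρ
  refine ⟨(ps, last), ⟨hps, hlast, heq⟩, ?_⟩
  rintro ⟨ps', last'⟩ ⟨hps', hlast', heq'⟩
  obtain ⟨h1, h2⟩ := assemble_inj M hM ps' last' ps last hps' hlast' hps hlast
    (heq'.symm.trans heq)
  simp [h1, h2]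
end

section
/- For all countable ordinals ε < ζ and every (Λ₁, h₁) ∈ Y_ε, there exists (Λ₂, h₂) ∈ Y_ζ such that Λ₁ ⊆ Λ₂. -/
-- helpers

lemma nil_mem_of_lamTree {Λ : Set (List ℕ)} (hΛ : LamTree Λ) : [] ∈ Λ := by
  obtain ⟨ρ, hρ⟩ := hΛ.1
  exact hΛ.2.1 ρ hρ [] List.nil_prefix

lemma children_dichotomy {Λ : Set (List ℕ)} (hΛ : LamTree Λ) :
    (∀ k : ℕ, [k] ∈ Λ) ∨ Λ = {[]} := by
  rcases hΛ.2.2.1 [] (nil_mem_of_lamTree hΛ) with h | h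
  · exact Or.inl (by simpa using h)
  · right
    ext ρ
    constructor
    · intro hρ
      cases ρ with
      | nil => rfl
      | cons k σ =>
        exact absurd (hΛ.2.1 _ hρ [k] ⟨σ, rfl⟩) (by simpa using h k)
    · rintro rfl; exact nil_mem_of_lamTree hΛ

lemma memY_trivial (ζ : Ordinal) : MemY ζ {[]} (fun _ => ζ) := by
  refine ⟨⟨⟨[], rfl⟩, ?_, ?_, ?_, ?_⟩, ?_, rfl, ?_, ?_, ?_⟩
  · rintro ρ rfl σ hσ
    simpa using List.prefix_nil.mp hσ
  · rintro ρ rfl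
    exact Or.inr (fun k hk => by simp at hk)
  · rintro ν₁ ν₂ hlen rfl _
    exact (List.length_eq_zero_iff.mp hlen.symm).symm ▸ rfl
  · rintro ⟨x, hx⟩
    simpa using hx 1
  · rintro ρ rfl; exact le_refl _
  · rintro ρ rfl ρ₂ h2 _ hne
    exact absurd h2.symm hne
  · rintro ρ rfl θ _ k hk
    simp at hk
  · rintro ρ rfl _ β _
    exact ⟨0, fun k _ hk => by simp at hk⟩

def subT (k : ℕ) (Λ : Set (List ℕ)) : Set (List ℕ) := {ρ | k :: ρ ∈ Λ}

lemma memY_subT {ε : Ordinal} {Λ : Set (List ℕ)} {h : List ℕ → Ordinal}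
    (hY : MemY ε Λ h) (k : ℕ) (hk : [k] ∈ Λ) :
    MemY (h [k]) (subT k Λ) (fun ρ => h (k :: ρ)) := by
  obtain ⟨⟨_, hinit, hchild, hmono, hwf⟩, hle, hnil, hdec, hsucc, hlim⟩ := hY
  refine ⟨⟨⟨[], hk⟩, ?_, ?_, ?_, ?_⟩, ?_, rfl, ?_, ?_, ?_⟩
  · intro ρ hρ σ hσ
    exact hinit _ hρ _ (List.cons_prefix_cons.mpr ⟨rfl, hσ⟩)
  · intro ρ hρ
    rcases hchild _ hρ with h1 | h1
    · exact Or.inl (fun m => by have := h1 m; simpa [subT] using this)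
    · exact Or.inr (fun m => by have := h1 m; simpa [subT] using this)
  · intro ν₁ ν₂ hlen h1 hdom
    refine hmono (k :: ν₁) (k :: ν₂) (by simp [hlen]) h1 ?_
    intro l
    cases l with
    | zero => simp
    | succ l => simpa using hdom l
  · rintro ⟨x, hx⟩
    refine hwf ⟨fun n => match n with | 0 => k | (i+1) => x i, fun n => ?_⟩
    cases n with
    | zero => exact hinit _ hk _ List.nil_prefix
    | succ n =>
      have := hx n
      rw [List.ofFn_succ]
      exact this
  · intro ρ hρ
    rcases eq_or_ne ρ [] with rfl | hne
    · exact le_refl _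
    · exact le_of_lt (hdec [k] hk (k :: ρ) hρ ⟨ρ, rfl⟩ (by intro hEq; exact hne ((List.cons.inj hEq).2.symm)))
  · intro ρ₁ h1 ρ₂ h2 hpre hne
    exact hdec _ h1 _ h2 (List.cons_prefix_cons.mpr ⟨rfl, hpre⟩) (by simpa using hne)
  · intro ρ hρ θ hθ m hm
    have := hsucc (k :: ρ) hρ θ hθ m (by simpa [subT] using hm)
    simpa using this
  · intro ρ hρ hl β hβ
    obtain ⟨K, hK⟩ := hlim (k :: ρ) hρ hl β hβ
    exact ⟨K, fun m hm hmem => by have := hK m hm (by simpa [subT] using hmem); simpa using this⟩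

def glueSet (S : ℕ → Set (List ℕ)) : Set (List ℕ) :=
  {l | l = [] ∨ ∃ k ρ, ρ ∈ S k ∧ l = k :: ρ}

def glueRank (ζ : Ordinal) (g : ℕ → List ℕ → Ordinal) : List ℕ → Ordinal :=
  fun l => match l with
  | [] => ζ
  | k :: ρ => g k ρ

lemma mem_glueSet_cons {S : ℕ → Set (List ℕ)} {k : ℕ} {ρ : List ℕ} :
    k :: ρ ∈ glueSet S ↔ ρ ∈ S k := by
  constructor
  · rintro (h | ⟨k', ρ', hρ', hEq⟩)
    · simp at h
    · obtain ⟨rfl, rfl⟩ := List.cons.inj hEq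
      exact hρ'
  · intro h; exact Or.inr ⟨k, ρ, h, rfl⟩

lemma subset_glueSet {Λ : Set (List ℕ)} {S : ℕ → Set (List ℕ)}
    (h : ∀ k ρ, k :: ρ ∈ Λ → ρ ∈ S k) : Λ ⊆ glueSet S := by
  intro l hl
  cases l with
  | nil => exact Or.inl rfl
  | cons k ρ => exact Or.inr ⟨k, ρ, h k ρ hl, rfl⟩

lemma memY_glue (ζ : Ordinal) (S : ℕ → Set (List ℕ)) (g : ℕ → List ℕ → Ordinal)
    (δ : ℕ → Ordinal)
    (hS : ∀ k, MemY (δ k) (S k) (g k))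
    (hchain : ∀ k, S k ⊆ S (k + 1))
    (hδζ : ∀ k, δ k < ζ)
    (hsucc : ∀ θ : Ordinal, ζ = θ + 1 → ∀ k, δ k = θ)
    (hlim : Order.IsSuccLimit ζ → ∀ β < ζ, ∃ K : ℕ, ∀ k ≥ K, β ≤ δ k) :
    MemY ζ (glueSet S) (glueRank ζ g) := by
  have hmonoS : ∀ a b : ℕ, a ≤ b → S a ⊆ S b := fun a b hab =>
    monotone_nat_of_le_succ (f := S) hchain hab
  refine ⟨⟨⟨[], Or.inl rfl⟩, ?_, ?_, ?_, ?_⟩, ?_, rfl, ?_, ?_, ?_⟩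
  · -- initial segments
    rintro ρ hρ σ hσ
    rcases hρ with rfl | ⟨k, ρ', hρ', rfl⟩
    · simpa using (List.prefix_nil.mp hσ) ▸ (Or.inl rfl : ([] : List ℕ) ∈ glueSet S)
    · cases σ with
      | nil => exact Or.inl rfl
      | cons m σ' =>
        obtain ⟨rfl, hpre⟩ := List.cons_prefix_cons.mp hσ
        exact mem_glueSet_cons.mpr ((hS m).1.2.1 _ hρ' _ hpre)
  · -- children all-or-none
    rintro ρ hρ
    rcases hρ with rfl | ⟨k, ρ', hρ', rfl⟩
    · exact Or.inl (fun m => by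
        simpa using mem_glueSet_cons.mpr (nil_mem_of_lamTree (hS m).1))
    · rcases (hS k).1.2.2.1 ρ' hρ' with h1 | h1
      · exact Or.inl (fun m => by
          rw [List.cons_append]; exact mem_glueSet_cons.mpr (h1 m))
      · exact Or.inr (fun m hm => h1 m (by
          rw [List.cons_append] at hm; exact mem_glueSet_cons.mp hm))
  · -- monotone
    intro ν₁ ν₂ hlen h1 hdom
    rcases h1 with rfl | ⟨k, ρ₁, hρ₁, rfl⟩
    · exact (List.length_eq_zero_iff.mp hlen.symm) ▸ Or.inl rfl
    · cases ν₂ with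
      | nil => simp at hlen
      | cons m ρ₂ =>
        have hkm : k ≤ m := by simpa using hdom 0
        have hd : ∀ l, ρ₁.getD l 0 ≤ ρ₂.getD l 0 := fun l => by simpa using hdom (l + 1)
        have : ρ₁ ∈ S m := hmonoS k m hkm hρ₁
        exact mem_glueSet_cons.mpr
          ((hS m).1.2.2.2.1 ρ₁ ρ₂ (by simpa using hlen) this hd)
  · -- well-founded
    rintro ⟨x, hx⟩
    have h1 : ∀ n, (List.ofFn fun i : Fin n => x (i + 1)) ∈ S (x 0) := by
      intro n
      have := hx (n + 1)
      rw [List.ofFn_succ] at this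
      exact mem_glueSet_cons.mp this
    exact (hS (x 0)).1.2.2.2.2 ⟨fun i => x (i + 1), h1⟩
  · -- h ≤ ζ
    rintro ρ hρ
    rcases hρ with rfl | ⟨k, ρ', hρ', rfl⟩
    · exact le_refl _
    · exact le_trans ((hS k).2.1 ρ' hρ') (le_of_lt (hδζ k))
  · -- strict decrease
    rintro ρ₁ h1 ρ₂ h2 hpre hne
    rcases h1 with rfl | ⟨k, σ₁, hσ₁, rfl⟩
    · rcases h2 with rfl | ⟨m, σ₂, hσ₂, rfl⟩
      · exact absurd rfl hne
      · exact lt_of_le_of_lt ((hS m).2.1 σ₂ hσ₂) (hδζ m)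
    · rcases h2 with rfl | ⟨m, σ₂, hσ₂, rfl⟩
      · simpa using List.prefix_nil.mp hpre
      · obtain ⟨rfl, hpre'⟩ := List.cons_prefix_cons.mp hpre
        exact (hS k).2.2.2.1 σ₁ hσ₁ σ₂ hσ₂ hpre' (by simpa using hne)
  · -- successor
    rintro ρ hρ θ hθ m hm
    rcases hρ with rfl | ⟨k, σ, hσ, rfl⟩
    · have hδ : δ m = θ := hsucc θ hθ m
      have : ([] : List ℕ) ++ [m] = m :: ([] : List ℕ) := rfl
      rw [this]
      show g m [] = θ
      rw [(hS m).2.2.1, hδ]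
    · rw [List.cons_append] at hm ⊢
      show g k (σ ++ [m]) = θ
      exact (hS k).2.2.2.2.1 σ hσ θ hθ m (mem_glueSet_cons.mp hm)
  · -- limit
    rintro ρ hρ hl β hβ
    rcases hρ with rfl | ⟨k, σ, hσ, rfl⟩
    · obtain ⟨K, hK⟩ := hlim hl β hβ
      refine ⟨K, fun m hm _ => ?_⟩
      have : ([] : List ℕ) ++ [m] = m :: ([] : List ℕ) := rfl
      rw [this]
      show β ≤ g m []
      rw [(hS m).2.2.1]
      exact hK m hm
    · obtain ⟨K, hK⟩ := (hS k).2.2.2.2.2 σ hσ hl β hβ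
      refine ⟨K, fun m hm hmem => ?_⟩
      rw [List.cons_append] at hmem ⊢
      exact hK m hm (mem_glueSet_cons.mp hmem)

lemma nat_chain {α : Type*} (G : ℕ → α → Prop) (R : α → α → Prop)
    (h0 : ∃ a, G 0 a) (hs : ∀ k a, G k a → ∃ b, G (k + 1) b ∧ R a b) :
    ∃ f : ℕ → α, (∀ k, G k (f k)) ∧ ∀ k, R (f k) (f (k + 1)) := by
  let F : ∀ k : ℕ, {a // G k a} := fun k => Nat.rec
    ⟨h0.choose, h0.choose_spec⟩
    (fun k prev => ⟨(hs k prev.1 prev.2).choose, (hs k prev.1 prev.2).choose_spec.1⟩) k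
  refine ⟨fun k => (F k).1, fun k => (F k).2, fun k => ?_⟩
  exact (hs k (F k).1 (F k).2).choose_spec.2

lemma succ_lt_of_add_one {M ζ : Ordinal} (hl : Order.IsSuccLimit ζ) (hM : M < ζ) : M + 1 < ζ := by
  rw [Ordinal.add_one_eq_succ]; exact hl.succ_lt hM

lemma lt_add_one_ord (M : Ordinal) : M < M + 1 := by
  rw [Ordinal.add_one_eq_succ]; exact Order.lt_succ M

universe u_key

theorem key : ∀ ζ : Ordinal.{u_key}, ζ < (Cardinal.aleph 1).ord →
    ∀ α, α ≤ ζ → ∀ β, β ≤ ζ → ∀ A gA B gB, MemY α A gA → MemY β B gB →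
      ∃ C gC, MemY ζ C gC ∧ A ⊆ C ∧ B ⊆ C := by
  intro ζ
  induction ζ using Ordinal.induction with
  | h ζ IH =>
  intro hζω α hα β hβ A gA B gB hA hB
  classical
  -- the rank of any root-child is strictly below ζ
  have hchildlt : ∀ (γ : Ordinal) (Λ : Set (List ℕ)) (g : List ℕ → Ordinal),
      γ ≤ ζ → MemY γ Λ g → ∀ k : ℕ, [k] ∈ Λ → g [k] < ζ := by
    intro γ Λ g hγ hΛ k hk
    have h1 : g [k] < g [] :=
      hΛ.2.2.2.1 [] (nil_mem_of_lamTree hΛ.1) [k] hk ⟨[k], rfl⟩ (by simp)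
    rw [hΛ.2.2.1] at h1
    exact lt_of_lt_of_le h1 hγ
  -- given a target μ < ζ dominating the child rank, produce a Y_μ tree containing the subtree
  have comp : ∀ (γ : Ordinal) (Λ : Set (List ℕ)) (g : List ℕ → Ordinal), MemY γ Λ g →
      ∀ (μ : Ordinal) (k : ℕ), μ < ζ → ([k] ∈ Λ → g [k] ≤ μ) →
      ∃ T gT, MemY μ T gT ∧ subT k Λ ⊆ T := by
    intro γ Λ g hΛ μ k hμζ hbd
    by_cases hk : [k] ∈ Λ
    · obtain ⟨C, gC, hC, h1, _⟩ := IH μ hμζ (hμζ.trans hζω) (g [k]) (hbd hk) μ le_rfl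
        (subT k Λ) (fun ρ => g (k :: ρ)) {[]} (fun _ => μ)
        (memY_subT hΛ k hk) (memY_trivial μ)
      exact ⟨C, gC, hC, h1⟩
    · refine ⟨{[]}, fun _ => μ, memY_trivial μ, ?_⟩
      intro ρ hρ
      exact absurd (hΛ.1.2.1 _ hρ [k] ⟨ρ, rfl⟩) hk
  rcases Ordinal.zero_or_succ_or_isSuccLimit ζ with rfl | ⟨θ, hζs⟩ | hl
  · -- ζ = 0 : both trees are {[]}
    have hsub : ∀ (γ : Ordinal) (Λ : Set (List ℕ)) (g : List ℕ → Ordinal),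
        γ ≤ 0 → MemY γ Λ g → Λ ⊆ {[]} := by
      intro γ Λ g hγ hΛ ρ hρ
      rcases eq_or_ne ρ [] with rfl | hne
      · rfl
      · have h1 : g ρ < g [] :=
          hΛ.2.2.2.1 [] (nil_mem_of_lamTree hΛ.1) ρ hρ List.nil_prefix (Ne.symm hne)
        exact absurd (lt_of_lt_of_le (h1.trans_le (le_of_eq hΛ.2.2.1)) hγ)
          (fun h => not_lt_zero h)
    exact ⟨{[]}, fun _ => 0, memY_trivial 0, hsub α A gA hα hA, hsub β B gB hβ hB⟩
  · -- ζ = θ + 1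
    have hζ1 : ζ = θ + 1 := by rw [Ordinal.add_one_eq_succ]; exact hζs.symm
    have hθζ : θ < ζ := by rw [← hζs]; exact Order.lt_succ θ
    have hbd : ∀ (γ : Ordinal) (Λ : Set (List ℕ)) (g : List ℕ → Ordinal),
        γ ≤ ζ → MemY γ Λ g → ∀ k : ℕ, [k] ∈ Λ → g [k] ≤ θ := by
      intro γ Λ g hγ hΛ k hk
      have := hchildlt γ Λ g hγ hΛ k hk
      rw [← hζs] at this
      exact Order.lt_succ_iff.mp this
    -- build the chain of level-θ subtrees
    obtain ⟨F, hFG, hFR⟩ := nat_chain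
      (G := fun k p => MemY θ (Prod.fst p) p.2 ∧ subT k A ⊆ p.1 ∧ subT k B ⊆ p.1)
      (R := fun p q => p.1 ⊆ q.1)
      (by
        obtain ⟨TA, gTA, hTA, hTA2⟩ := comp α A gA hA θ 0 hθζ (hbd α A gA hα hA 0)
        obtain ⟨TB, gTB, hTB, hTB2⟩ := comp β B gB hB θ 0 hθζ (hbd β B gB hβ hB 0)
        obtain ⟨C0, gC0, hC0, h1, h2⟩ := IH θ hθζ (hθζ.trans hζω) θ le_rfl θ le_rfl
          TA gTA TB gTB hTA hTB
        exact ⟨(C0, gC0), hC0, hTA2.trans h1, hTB2.trans h2⟩)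
      (by
        rintro k ⟨P, gP⟩ ⟨hP, _, _⟩
        obtain ⟨TA, gTA, hTA, hTA2⟩ := comp α A gA hA θ (k+1) hθζ (hbd α A gA hα hA (k+1))
        obtain ⟨TB, gTB, hTB, hTB2⟩ := comp β B gB hB θ (k+1) hθζ (hbd β B gB hβ hB (k+1))
        obtain ⟨D, gD, hD, h1, h2⟩ := IH θ hθζ (hθζ.trans hζω) θ le_rfl θ le_rfl
          TA gTA TB gTB hTA hTB
        obtain ⟨Q, gQ, hQ, h3, h4⟩ := IH θ hθζ (hθζ.trans hζω) θ le_rfl θ le_rfl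
          P gP D gD hP hD
        exact ⟨(Q, gQ), ⟨hQ, hTA2.trans (h1.trans h4), hTB2.trans (h2.trans h4)⟩, h3⟩)
    refine ⟨glueSet (fun k => (F k).1), glueRank ζ (fun k => (F k).2), ?_, ?_, ?_⟩
    · refine memY_glue ζ _ _ (fun _ => θ) (fun k => (hFG k).1) hFR (fun _ => hθζ) ?_ ?_
      · intro θ' hθ' k
        have h5 : Order.succ θ = Order.succ θ' := by
          rw [← Ordinal.add_one_eq_succ, ← Ordinal.add_one_eq_succ, ← hζ1, ← hθ']
        exact Order.succ_injective h5
      · intro hl'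
        exfalso
        have h6 := hl'.succ_lt hθζ
        rw [← hζs] at h6
        exact lt_irrefl _ h6
    · exact subset_glueSet (fun k ρ hkρ => (hFG k).2.1 hkρ)
    · exact subset_glueSet (fun k ρ hkρ => (hFG k).2.2 hkρ)
  · -- ζ limit
    have hcnt : (Set.Iio ζ).Countable := by
      rw [Cardinal.countable_iff_lt_aleph_one, Ordinal.mk_Iio_ordinal]
      have h1 : ζ.card < Cardinal.aleph 1 := Cardinal.lt_ord.mp hζω
      have h2 : (Cardinal.aleph 1 : Cardinal.{u_key+1}) =
          Cardinal.lift.{u_key+1, u_key} (Cardinal.aleph (1 : Ordinal.{u_key})) := by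
        rw [Cardinal.lift_aleph, Ordinal.lift_one]
      rw [h2]
      exact Cardinal.lift_lt.mpr h1
    obtain ⟨f, hf⟩ := hcnt.exists_eq_range ⟨0, hl.pos⟩
    have hfζ : ∀ n, f n < ζ := by
      intro n
      have : f n ∈ Set.Iio ζ := by rw [hf]; exact Set.mem_range_self n
      exact this
    have hfsurj : ∀ γ, γ < ζ → ∃ n, f n = γ := by
      intro γ hγ
      have : γ ∈ Set.range f := by rw [← hf]; exact hγ
      obtain ⟨n, hn⟩ := this
      exact ⟨n, hn⟩
    set rkA : ℕ → Ordinal := fun k => if [k] ∈ A then gA [k] else 0 with hrkA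
    set rkB : ℕ → Ordinal := fun k => if [k] ∈ B then gB [k] else 0 with hrkB
    have hrkAζ : ∀ k, rkA k < ζ := by
      intro k
      simp only [hrkA]
      by_cases hk : [k] ∈ A
      · rw [if_pos hk]; exact hchildlt α A gA hα hA k hk
      · rw [if_neg hk]; exact hl.pos
    have hrkBζ : ∀ k, rkB k < ζ := by
      intro k
      simp only [hrkB]
      by_cases hk : [k] ∈ B
      · rw [if_pos hk]; exact hchildlt β B gB hβ hB k hk
      · rw [if_neg hk]; exact hl.pos
    -- chain of subtrees with increasing levels
    obtain ⟨F, hFG, hFR⟩ := nat_chain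
      (G := fun k (a : Ordinal × (Set (List ℕ) × (List ℕ → Ordinal))) =>
        a.1 < ζ ∧ f k ≤ a.1 ∧ MemY a.1 a.2.1 a.2.2 ∧ subT k A ⊆ a.2.1 ∧ subT k B ⊆ a.2.1)
      (R := fun a b => a.1 ≤ b.1 ∧ a.2.1 ⊆ b.2.1)
      (by
        set M : Ordinal := max (f 0) (max (rkA 0) (rkB 0)) with hM
        have hMζ : M < ζ := max_lt (hfζ 0) (max_lt (hrkAζ 0) (hrkBζ 0))
        have hμζ : M + 1 < ζ := succ_lt_of_add_one hl hMζ
        obtain ⟨TA, gTA, hTA, hTA2⟩ := comp α A gA hA (M+1) 0 hμζ (fun hk => by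
          refine le_of_lt (lt_of_le_of_lt ?_ (lt_add_one_ord M))
          rw [hM]
          calc gA [0] = rkA 0 := by simp only [hrkA]; simp [hk]
            _ ≤ max (rkA 0) (rkB 0) := le_max_left _ _
            _ ≤ _ := le_max_right _ _)
        obtain ⟨TB, gTB, hTB, hTB2⟩ := comp β B gB hB (M+1) 0 hμζ (fun hk => by
          refine le_of_lt (lt_of_le_of_lt ?_ (lt_add_one_ord M))
          rw [hM]
          calc gB [0] = rkB 0 := by simp only [hrkB]; simp [hk]
            _ ≤ max (rkA 0) (rkB 0) := le_max_right _ _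
            _ ≤ _ := le_max_right _ _)
        obtain ⟨C0, gC0, hC0, h1, h2⟩ := IH (M+1) hμζ (hμζ.trans hζω) (M+1) le_rfl (M+1) le_rfl
          TA gTA TB gTB hTA hTB
        refine ⟨(M+1, C0, gC0), hμζ, ?_, hC0, hTA2.trans h1, hTB2.trans h2⟩
        exact le_of_lt (lt_of_le_of_lt (by rw [hM]; exact le_max_left _ _) (lt_add_one_ord M)))
      (by
        rintro k ⟨ν, P, gP⟩ ⟨hνζ, hfν, hP, _, _⟩
        set M : Ordinal := max ν (max (f (k+1)) (max (rkA (k+1)) (rkB (k+1)))) with hM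
        have hMζ : M < ζ := max_lt hνζ (max_lt (hfζ (k+1)) (max_lt (hrkAζ (k+1)) (hrkBζ (k+1))))
        have hμζ : M + 1 < ζ := succ_lt_of_add_one hl hMζ
        have hMμ : M < M + 1 := lt_add_one_ord M
        obtain ⟨TA, gTA, hTA, hTA2⟩ := comp α A gA hA (M+1) (k+1) hμζ (fun hk => by
          refine le_of_lt (lt_of_le_of_lt ?_ hMμ)
          rw [hM]
          calc gA [k+1] = rkA (k+1) := by simp only [hrkA]; simp [hk]
            _ ≤ max (rkA (k+1)) (rkB (k+1)) := le_max_left _ _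
            _ ≤ max (f (k+1)) _ := le_max_right _ _
            _ ≤ _ := le_max_right _ _)
        obtain ⟨TB, gTB, hTB, hTB2⟩ := comp β B gB hB (M+1) (k+1) hμζ (fun hk => by
          refine le_of_lt (lt_of_le_of_lt ?_ hMμ)
          rw [hM]
          calc gB [k+1] = rkB (k+1) := by simp only [hrkB]; simp [hk]
            _ ≤ max (rkA (k+1)) (rkB (k+1)) := le_max_right _ _
            _ ≤ max (f (k+1)) _ := le_max_right _ _
            _ ≤ _ := le_max_right _ _)
        obtain ⟨D, gD, hD, h1, h2⟩ := IH (M+1) hμζ (hμζ.trans hζω) (M+1) le_rfl (M+1) le_rfl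
          TA gTA TB gTB hTA hTB
        have hνμ : ν ≤ M + 1 := le_of_lt (lt_of_le_of_lt (by rw [hM]; exact le_max_left _ _) hMμ)
        obtain ⟨Q, gQ, hQ, h3, h4⟩ := IH (M+1) hμζ (hμζ.trans hζω) ν hνμ (M+1) le_rfl
          P gP D gD hP hD
        refine ⟨(M+1, Q, gQ), ⟨hμζ, ?_, hQ, hTA2.trans (h1.trans h4), hTB2.trans (h2.trans h4)⟩,
          hνμ, h3⟩
        exact le_of_lt (lt_of_le_of_lt
          (by rw [hM]; exact le_trans (le_max_left _ _) (le_max_right _ _)) hMμ))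
    have hδmono : Monotone (fun k => (F k).1) := monotone_nat_of_le_succ (fun k => (hFR k).1)
    refine ⟨glueSet (fun k => (F k).2.1), glueRank ζ (fun k => (F k).2.2), ?_, ?_, ?_⟩
    · refine memY_glue ζ _ _ (fun k => (F k).1) (fun k => (hFG k).2.2.1)
        (fun k => (hFR k).2) (fun k => (hFG k).1) ?_ ?_
      · intro θ hθ k
        exfalso
        have hθζ : θ < ζ := by rw [hθ]; exact lt_add_one_ord θ
        have h6 := hl.succ_lt hθζ
        rw [← Ordinal.add_one_eq_succ, ← hθ] at h6
        exact lt_irrefl _ h6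
      · intro _ γ hγ
        obtain ⟨m, hm⟩ := hfsurj γ hγ
        exact ⟨m, fun k hk => le_trans (hm ▸ (hFG m).2.1) (hδmono hk)⟩
    · exact subset_glueSet (fun k ρ hkρ => (hFG k).2.2.2.1 hkρ)
    · exact subset_glueSet (fun k ρ hkρ => (hFG k).2.2.2.2 hkρ)

/-- For countable ordinals `ε < ζ` and `(Λ₁, h₁) ∈ Y_ε`, there is
`(Λ₂, h₂) ∈ Y_ζ` with `Λ₁ ⊆ Λ₂`. -/
theorem Y_extension (ε ζ : Ordinal) (hεζ : ε < ζ) (hζ : ζ < (Cardinal.aleph 1).ord)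
    (Λ₁ : Set (List ℕ)) (h₁ : List ℕ → Ordinal) (hY : MemY ε Λ₁ h₁) :
    ∃ (Λ₂ : Set (List ℕ)) (h₂ : List ℕ → Ordinal), MemY ζ Λ₂ h₂ ∧ Λ₁ ⊆ Λ₂ := by
  obtain ⟨C, gC, hC, h1, _⟩ := key ζ hζ ε (le_of_lt hεζ) ζ le_rfl Λ₁ h₁ {[]} (fun _ => ζ)
    hY (memY_trivial ζ)
  exact ⟨C, gC, hC, h1⟩
end
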